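/- Under the probability measure P̄ defined by dP̄/dP restricted to 𝒢_t equal to Λ_t, the random variables Y_1, Y_2, …, Y_t are independent standard Gaussian N(0,1) random variables; in particular, for every t ≥ 0 and every τ ∈ ℝ, P̄(Y_{t+1} ≤ τ | 𝒢_t) = ∫_{−∞}^{τ} φ(u) du almost surely. -/

import Mathlib

open MeasureTheory ProbabilityTheory Finset Matrix
open scoped ENNReal

noncomputable section

/-- Standard normal density `φ`. -/
def stdPDF (u : ℝ) : ℝ := (Real.sqrt (2 * Real.pi))⁻¹ * Real.exp (-u ^ 2 / 2)

/-- `𝒴_t`, the σ-field generated by the observations `Y_s`, `s ≤ t`. -/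
def sigY {Ω : Type*} (Y : ℤ → Ω → ℝ) (t : ℕ) : MeasurableSpace Ω :=
  ⨆ s : {s : ℤ // s ≤ (t : ℤ)}, MeasurableSpace.comap (Y s.1) inferInstance

/-- `ℱ_t`, the σ-field generated by the hidden states `X_0, …, X_t`. -/
def sigF {Ω : Type*} {N : ℕ} (X : ℕ → Ω → Fin N → ℝ) (t : ℕ) : MeasurableSpace Ω :=
  ⨆ s : Fin (t + 1), MeasurableSpace.comap (X s.1) inferInstance

/-- `𝒢_t`, the σ-field generated by `X_0, …, X_t` and the observations up to time `t`. -/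
def sigG {Ω : Type*} {N : ℕ} (X : ℕ → Ω → Fin N → ℝ) (Y : ℤ → Ω → ℝ) (t : ℕ) :
    MeasurableSpace Ω := sigF X t ⊔ sigY Y t

/-- The vector `(Y_t, Y_{t-1}, …, Y_{t-p+1})` of the `p` last observations. -/
def past {Ω : Type*} (Y : ℤ → Ω → ℝ) (p : ℕ) (t : ℤ) (ω : Ω) : Fin p → ℝ :=
  fun k => Y (t - (k : ℤ)) ω

/-- `Λ_t = ∏_{l=1}^t λ_l`, with `λ_{l+1} = ⟨σ, X_l⟩ φ(Y_{l+1}) / φ(ε_{l+1})` and `Λ_0 = 1`. -/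
def Lam {Ω : Type*} {N : ℕ} (X : ℕ → Ω → Fin N → ℝ) (Y : ℤ → Ω → ℝ) (ε : ℕ → Ω → ℝ)
    (σv : Fin N → ℝ) (t : ℕ) (ω : Ω) : ℝ :=
  ∏ l ∈ Finset.range t,
    (∑ i, σv i * X l ω i) * stdPDF (Y ((l : ℤ) + 1) ω) / stdPDF (ε (l + 1) ω)

/-- `Γ^i(Y_{t+1}) = φ((Y_{t+1} − F_{e_i}(Y_{t−p+1},…,Y_t))/σ_{e_i}) / (σ_{e_i} φ(Y_{t+1}))`. -/
def Gam {Ω : Type*} {N p : ℕ} (Y : ℤ → Ω → ℝ) (F : Fin N → (Fin p → ℝ) → ℝ)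
    (σv : Fin N → ℝ) (i : Fin N) (t : ℕ) (ω : Ω) : ℝ :=
  stdPDF ((Y ((t : ℤ) + 1) ω - F i (past Y p t ω)) / σv i) /
    (σv i * stdPDF (Y ((t : ℤ) + 1) ω))

set_option linter.unusedSectionVars false
set_option linter.unusedVariables false

lemma stdPDF_pos (u : ℝ) : 0 < stdPDF u := by
  unfold stdPDF
  have := Real.pi_pos
  positivity

lemma measurable_stdPDF : Measurable stdPDF := by
  unfold stdPDF
  fun_prop

lemma gaussianPDF_zero_one (x : ℝ) : gaussianPDF 0 1 x = ENNReal.ofReal (stdPDF x) := by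
  simp only [gaussianPDF, gaussianPDFReal, stdPDF]
  norm_num

lemma gaussianReal_zero_one :
    gaussianReal 0 1 = volume.withDensity fun x => ENNReal.ofReal (stdPDF x) := by
  rw [gaussianReal_of_var_ne_zero 0 one_ne_zero]
  congr 1
  ext x
  exact gaussianPDF_zero_one x

lemma gaussianReal_zero_one_apply {B : Set ℝ} (hB : MeasurableSet B) :
    gaussianReal 0 1 B = ∫⁻ u in B, ENNReal.ofReal (stdPDF u) := by
  rw [gaussianReal_zero_one, withDensity_apply _ hB]

lemma inner_integral {B : Set ℝ} (hB : MeasurableSet B) {a b : ℝ} (hb : 0 < b) :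
    ∫⁻ e, (B.indicator (fun _ => (1 : ℝ≥0∞)) (a + b * e)) *
        ENNReal.ofReal (b * stdPDF (a + b * e) / stdPDF e) ∂(gaussianReal 0 1)
      = gaussianReal 0 1 B := by
  have hg : Measurable fun e : ℝ =>
      (B.indicator (fun _ => (1 : ℝ≥0∞)) (a + b * e)) *
        ENNReal.ofReal (b * stdPDF (a + b * e) / stdPDF e) := by
    have hT : Measurable fun e : ℝ => a + b * e := by fun_prop
    exact ((measurable_one.indicator hB).comp hT).mul
      ((((measurable_stdPDF.comp hT).const_mul b).div measurable_stdPDF).ennreal_ofReal)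
  rw [gaussianReal_zero_one_apply hB]
  conv_lhs => rw [gaussianReal_zero_one]
  rw [lintegral_withDensity_eq_lintegral_mul _ (measurable_stdPDF.ennreal_ofReal) hg]
  have hpt : ∀ e : ℝ,
      ((fun x => ENNReal.ofReal (stdPDF x)) * fun e =>
        (B.indicator (fun _ => (1 : ℝ≥0∞)) (a + b * e)) *
          ENNReal.ofReal (b * stdPDF (a + b * e) / stdPDF e)) e
      = B.indicator (fun u => ENNReal.ofReal (b * stdPDF u)) (a + b * e) := by
    intro e
    have h1 : ENNReal.ofReal (stdPDF e) * ENNReal.ofReal (b * stdPDF (a + b * e) / stdPDF e)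
        = ENNReal.ofReal (b * stdPDF (a + b * e)) := by
      rw [← ENNReal.ofReal_mul (stdPDF_pos e).le, mul_comm,
        div_mul_cancel₀ _ (stdPDF_pos e).ne']
    simp only [Pi.mul_apply]
    by_cases hmem : a + b * e ∈ B
    · simp only [Set.indicator_of_mem hmem, one_mul]
      rw [← h1]
    · simp [Set.indicator_of_notMem hmem]
  rw [lintegral_congr hpt]
  -- change of variables
  have hT : (fun e : ℝ => a + b * e) = (fun x => a + x) ∘ (fun e => b * e) := rfl
  have hmap : Measure.map (fun e : ℝ => a + b * e) volume
      = ENNReal.ofReal b⁻¹ • volume := by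
    rw [hT, ← Measure.map_map (by fun_prop) (by fun_prop)]
    rw [show (fun e : ℝ => b * e) = (b * ·) from rfl, Real.map_volume_mul_left hb.ne',
      Measure.map_smul, show (fun x : ℝ => a + x) = (a + ·) from rfl, map_add_left_eq_self,
      abs_of_pos (inv_pos.2 hb)]
  have hgm : Measurable fun u : ℝ => B.indicator (fun u => ENNReal.ofReal (b * stdPDF u)) u :=
    ((measurable_stdPDF.const_mul b).ennreal_ofReal).indicator hB
  calc ∫⁻ e, B.indicator (fun u => ENNReal.ofReal (b * stdPDF u)) (a + b * e)
      = ∫⁻ u, B.indicator (fun u => ENNReal.ofReal (b * stdPDF u)) u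
          ∂(Measure.map (fun e : ℝ => a + b * e) volume) := by
        rw [lintegral_map hgm (by fun_prop)]
    _ = ENNReal.ofReal b⁻¹ * ∫⁻ u, B.indicator (fun u => ENNReal.ofReal (b * stdPDF u)) u := by
        rw [hmap, lintegral_smul_measure, smul_eq_mul]
    _ = ENNReal.ofReal b⁻¹ * ∫⁻ u in B, ENNReal.ofReal (b * stdPDF u) := by
        rw [lintegral_indicator hB]
    _ = ENNReal.ofReal b⁻¹ * (ENNReal.ofReal b * ∫⁻ u in B, ENNReal.ofReal (stdPDF u)) := by
        congr 1
        rw [← lintegral_const_mul _ (measurable_stdPDF.ennreal_ofReal)]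
        congr 1; ext u; rw [← ENNReal.ofReal_mul hb.le]
    _ = ∫⁻ u in B, ENNReal.ofReal (stdPDF u) := by
        rw [← mul_assoc, ← ENNReal.ofReal_mul (inv_pos.2 hb).le, inv_mul_cancel₀ hb.ne',
          ENNReal.ofReal_one, one_mul]


section Meas

variable {Ω : Type*} [MeasurableSpace Ω] {N p : ℕ}
  (X : ℕ → Ω → Fin N → ℝ) (Y : ℤ → Ω → ℝ)

lemma measurable_Y_sigY {s : ℤ} {t : ℕ} (hs : s ≤ (t : ℤ)) :
    Measurable[sigY Y t] (Y s) :=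
  Measurable.of_comap_le (le_iSup (fun s : {s : ℤ // s ≤ (t : ℤ)} =>
    MeasurableSpace.comap (Y s.1) inferInstance) ⟨s, hs⟩)

lemma measurable_X_sigF {l t : ℕ} (hl : l ≤ t) :
    Measurable[sigF X l] (X l) → True := fun _ => trivial

lemma measurable_Y_sigG {s : ℤ} {t : ℕ} (hs : s ≤ (t : ℤ)) :
    Measurable[sigG X Y t] (Y s) :=
  (measurable_Y_sigY Y hs).mono le_sup_right le_rfl

lemma measurable_X_sigG {l t : ℕ} (hl : l ≤ t) :
    Measurable[sigG X Y t] (X l) := by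
  have h1 : Measurable[sigF X t] (X l) :=
    Measurable.of_comap_le (le_iSup (fun s : Fin (t + 1) =>
      MeasurableSpace.comap (X s.1) inferInstance) ⟨l, Nat.lt_succ_of_le hl⟩)
  exact h1.mono le_sup_left le_rfl

lemma sigY_mono {t t' : ℕ} (h : t ≤ t') : sigY Y t ≤ sigY Y t' := by
  refine iSup_le fun s => ?_
  exact le_iSup (fun s : {s : ℤ // s ≤ (t' : ℤ)} =>
    MeasurableSpace.comap (Y s.1) inferInstance) ⟨s.1, s.2.trans (by exact_mod_cast h)⟩

lemma sigF_mono {t t' : ℕ} (h : t ≤ t') : sigF X t ≤ sigF X t' := by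
  refine iSup_le fun s => ?_
  exact le_iSup (fun s : Fin (t' + 1) =>
    MeasurableSpace.comap (X s.1) inferInstance) ⟨s.1, by omega⟩

lemma sigG_mono {t t' : ℕ} (h : t ≤ t') : sigG X Y t ≤ sigG X Y t' :=
  sup_le_sup (sigF_mono X h) (sigY_mono Y h)

lemma sigG_le (hXm : ∀ t, Measurable (X t)) (hYm : ∀ s, Measurable (Y s)) (t : ℕ) :
    sigG X Y t ≤ ‹MeasurableSpace Ω› := by
  refine sup_le (iSup_le fun s => ?_) (iSup_le fun s => ?_)
  · exact (hXm s.1).comap_le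
  · exact (hYm s.1).comap_le

end Meas

set_option linter.unusedSectionVars false
set_option linter.unusedVariables false

section Key

variable {Ω : Type*} [MeasurableSpace Ω] {N p : ℕ}
  {X : ℕ → Ω → Fin N → ℝ} {Y : ℤ → Ω → ℝ} {ε : ℕ → Ω → ℝ}
  {F : Fin N → (Fin p → ℝ) → ℝ} {σv : Fin N → ℝ}

/-- positivity of `b_l ω = ∑ i, X l ω i * σv i`. -/
lemma b_pos (hσ : ∀ i, 0 < σv i) (hXb : ∀ t ω, ∃ i, X t ω = Pi.single i 1)
    (l : ℕ) (ω : Ω) : 0 < ∑ i, X l ω i * σv i := by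
  obtain ⟨i0, hi0⟩ := hXb l ω
  rw [hi0]
  have : ∑ i, (Pi.single i0 (1 : ℝ) : Fin N → ℝ) i * σv i = σv i0 := by
    simp [Pi.single_apply, ite_mul]
  rw [this]
  exact hσ i0

lemma sum_comm_b (l : ℕ) (ω : Ω) :
    (∑ i, σv i * X l ω i) = ∑ i, X l ω i * σv i := by
  exact Finset.sum_congr rfl fun i _ => mul_comm _ _

/-- `ε_{l+1}` expressed from `Y` and `X`. -/
lemma eps_rep (hσ : ∀ i, 0 < σv i) (hXb : ∀ t ω, ∃ i, X t ω = Pi.single i 1)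
    (hdyn : ∀ (t : ℕ) (ω : Ω), Y ((t : ℤ) + 1) ω =
      (∑ i, X t ω i * F i (past Y p ((t : ℤ)) ω)) + (∑ i, X t ω i * σv i) * ε (t + 1) ω)
    (l : ℕ) (ω : Ω) :
    ε (l + 1) ω = (Y ((l : ℤ) + 1) ω - ∑ i, X l ω i * F i (past Y p ((l : ℤ)) ω)) /
      (∑ i, X l ω i * σv i) := by
  have hb := b_pos hσ hXb (X := X) l ω
  rw [hdyn l ω]
  field_simp
  ring

lemma measurable_F (hFaff : ∀ i, ∃ (L : (Fin p → ℝ) →ₗ[ℝ] ℝ) (c : ℝ), ∀ v, F i v = L v + c)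
    (i : Fin N) : Measurable (F i) := by
  obtain ⟨L, c, h⟩ := hFaff i
  have : F i = fun v => L v + c := funext h
  rw [this]
  exact (L.continuous_of_finiteDimensional.measurable).add_const c

lemma measurable_past_sigG {t : ℕ} {l : ℤ} (hl : l ≤ (t : ℤ)) :
    Measurable[sigG X Y t] (fun ω => past Y p l ω) :=
  @measurable_pi_lambda Ω (Fin p) (fun _ => ℝ) (sigG X Y t) _ _
    (fun k => measurable_Y_sigG X Y
      (by have : (0 : ℤ) ≤ ((k : ℕ) : ℤ) := Int.natCast_nonneg _; omega))

lemma measurable_a_sigG (hFaff : ∀ i, ∃ (L : (Fin p → ℝ) →ₗ[ℝ] ℝ) (c : ℝ), ∀ v, F i v = L v + c)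
    {t l : ℕ} (hl : l ≤ t) :
    Measurable[sigG X Y t] (fun ω => ∑ i, X l ω i * F i (past Y p ((l : ℤ)) ω)) :=
  Finset.measurable_sum _ fun i _ =>
    ((measurable_pi_apply i).comp (measurable_X_sigG X Y hl)).mul
      ((measurable_F hFaff i).comp (measurable_past_sigG (by exact_mod_cast hl)))

lemma measurable_b_sigG {t l : ℕ} (hl : l ≤ t) :
    Measurable[sigG X Y t] (fun ω => ∑ i, X l ω i * σv i) :=
  Finset.measurable_sum _ fun i _ =>
    ((measurable_pi_apply i).comp (measurable_X_sigG X Y hl)).mul_const _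

lemma Lam_nonneg (hσ : ∀ i, 0 < σv i) (hXb : ∀ t ω, ∃ i, X t ω = Pi.single i 1)
    (t : ℕ) (ω : Ω) : 0 ≤ Lam X Y ε σv t ω := by
  refine Finset.prod_nonneg fun l _ => ?_
  have h1 : 0 < ∑ i, σv i * X l ω i := by
    rw [sum_comm_b]; exact b_pos hσ hXb l ω
  exact div_nonneg (mul_nonneg h1.le (stdPDF_pos _).le) (stdPDF_pos _).le

lemma measurable_Lam_sigG (hσ : ∀ i, 0 < σv i)
    (hFaff : ∀ i, ∃ (L : (Fin p → ℝ) →ₗ[ℝ] ℝ) (c : ℝ), ∀ v, F i v = L v + c)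
    (hXb : ∀ t ω, ∃ i, X t ω = Pi.single i 1)
    (hdyn : ∀ (t : ℕ) (ω : Ω), Y ((t : ℤ) + 1) ω =
      (∑ i, X t ω i * F i (past Y p ((t : ℤ)) ω)) + (∑ i, X t ω i * σv i) * ε (t + 1) ω)
    (t : ℕ) : Measurable[sigG X Y t] (Lam X Y ε σv t) := by
  have hrw : Lam X Y ε σv t = fun ω => ∏ l ∈ Finset.range t,
      (∑ i, X l ω i * σv i) * stdPDF (Y ((l : ℤ) + 1) ω) /
        stdPDF ((Y ((l : ℤ) + 1) ω - ∑ i, X l ω i * F i (past Y p ((l : ℤ)) ω)) /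
          (∑ i, X l ω i * σv i)) := by
    funext ω
    exact Finset.prod_congr rfl fun l _ => by
      rw [eps_rep hσ hXb hdyn l ω, sum_comm_b]
  rw [hrw]
  refine Finset.measurable_prod _ fun l hl => ?_
  have hlt : l < t := Finset.mem_range.mp hl
  have hYl : Measurable[sigG X Y t] (Y ((l : ℤ) + 1)) :=
    measurable_Y_sigG X Y (by omega)
  exact ((measurable_b_sigG hlt.le).mul (measurable_stdPDF.comp hYl)).div
    (measurable_stdPDF.comp ((hYl.sub (measurable_a_sigG hFaff hlt.le)).div
      (measurable_b_sigG hlt.le)))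

end Key


theorem key_step
    {Ω : Type*} [MeasurableSpace Ω] (P Pbar : Measure Ω)
    [IsProbabilityMeasure P]
    {N p : ℕ}
    (X : ℕ → Ω → Fin N → ℝ) (Y : ℤ → Ω → ℝ) (ε : ℕ → Ω → ℝ)
    (F : Fin N → (Fin p → ℝ) → ℝ) (σv : Fin N → ℝ)
    (hXm : ∀ t, Measurable (X t)) (hYm : ∀ s, Measurable (Y s)) (hεm : ∀ t, Measurable (ε t))
    (hσ : ∀ i, 0 < σv i)
    (hFaff : ∀ i, ∃ (L : (Fin p → ℝ) →ₗ[ℝ] ℝ) (c : ℝ), ∀ v, F i v = L v + c)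
    (hXb : ∀ t ω, ∃ i, X t ω = Pi.single i 1)
    (hdyn : ∀ (t : ℕ) (ω : Ω), Y ((t : ℤ) + 1) ω =
      (∑ i, X t ω i * F i (past Y p ((t : ℤ)) ω)) + (∑ i, X t ω i * σv i) * ε (t + 1) ω)
    (hεlaw : ∀ t : ℕ, Measure.map (ε (t + 1)) P = gaussianReal 0 1)
    (hεindep : ∀ t : ℕ,
      Indep (MeasurableSpace.comap (ε (t + 1)) inferInstance) (sigG X Y t) P)
    (hPbar : ∀ (t : ℕ) (s : Set Ω), MeasurableSet[sigG X Y t] s →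
      Pbar s = ∫⁻ ω in s, ENNReal.ofReal (Lam X Y ε σv t ω) ∂P)
    (t : ℕ) {B : Set ℝ} (hB : MeasurableSet B)
    {s : Set Ω} (hs : MeasurableSet[sigG X Y t] s) :
    Pbar (s ∩ Y ((t : ℤ) + 1) ⁻¹' B) = Pbar s * gaussianReal 0 1 B := by
  classical
  have hm : sigG X Y t ≤ ‹MeasurableSpace Ω› := sigG_le X Y hXm hYm t
  have hm' : sigG X Y (t + 1) ≤ ‹MeasurableSpace Ω› := sigG_le X Y hXm hYm (t + 1)
  set a : Ω → ℝ := fun ω => ∑ i, X t ω i * F i (past Y p ((t : ℤ)) ω) with ha_def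
  set b : Ω → ℝ := fun ω => ∑ i, X t ω i * σv i with hb_def
  have hbpos : ∀ ω, 0 < b ω := fun ω => b_pos hσ hXb t ω
  set Φ : Ω → ℝ≥0∞ := s.indicator (fun ω => ENNReal.ofReal (Lam X Y ε σv t ω)) with hΦ_def
  set V : Ω → ℝ≥0∞ × ℝ × ℝ := fun ω => (Φ ω, a ω, b ω) with hV_def
  set K : (ℝ≥0∞ × ℝ × ℝ) × ℝ → ℝ≥0∞ := fun q =>
    q.1.1 * (B.indicator (fun _ => (1 : ℝ≥0∞)) (q.1.2.1 + q.1.2.2 * q.2) *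
      ENNReal.ofReal (q.1.2.2 * stdPDF (q.1.2.1 + q.1.2.2 * q.2) / stdPDF q.2)) with hK_def
  -- measurability facts
  have hT : Measurable fun q : (ℝ≥0∞ × ℝ × ℝ) × ℝ => q.1.2.1 + q.1.2.2 * q.2 :=
    (measurable_fst.snd.fst).add ((measurable_fst.snd.snd).mul measurable_snd)
  have hKrest : Measurable fun q : (ℝ≥0∞ × ℝ × ℝ) × ℝ =>
      B.indicator (fun _ => (1 : ℝ≥0∞)) (q.1.2.1 + q.1.2.2 * q.2) *
        ENNReal.ofReal (q.1.2.2 * stdPDF (q.1.2.1 + q.1.2.2 * q.2) / stdPDF q.2) :=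
    ((measurable_const.indicator hB).comp hT).mul
      ((((measurable_fst.snd.snd).mul (measurable_stdPDF.comp hT)).div
        (measurable_stdPDF.comp measurable_snd)).ennreal_ofReal)
  have hK : Measurable K := (measurable_fst.fst).mul hKrest
  have hΦm : Measurable[sigG X Y t] Φ :=
    ((measurable_Lam_sigG hσ hFaff hXb hdyn t).ennreal_ofReal).indicator hs
  have ham : Measurable[sigG X Y t] a := measurable_a_sigG hFaff le_rfl
  have hbm : Measurable[sigG X Y t] b := measurable_b_sigG le_rfl
  have hVm : Measurable[sigG X Y t] V := hΦm.prodMk (ham.prodMk hbm)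
  have hVm0 : Measurable V := hVm.mono hm le_rfl
  have hW : Measurable fun ω => (V ω, ε (t + 1) ω) := hVm0.prodMk (hεm _)
  -- independence
  have hIndep : IndepFun V (ε (t + 1)) P := by
    have h1 : Indep (sigG X Y t) (MeasurableSpace.comap (ε (t + 1)) inferInstance) P :=
      (hεindep t).symm
    exact indep_of_indep_of_le_left h1 hVm.comap_le
  have hmapeq : P.map (fun ω => (V ω, ε (t + 1) ω)) = (P.map V).prod (P.map (ε (t + 1))) :=
    (indepFun_iff_map_prod_eq_prod_map_map hVm0.aemeasurable (hεm _).aemeasurable).1 hIndep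
  -- the set is sigG (t+1)-measurable
  have hYt1 : Measurable[sigG X Y (t + 1)] (Y ((t : ℤ) + 1)) := by
    have : ((t : ℤ) + 1) ≤ ((t + 1 : ℕ) : ℤ) := by push_cast; omega
    exact measurable_Y_sigG X Y this
  have hset : MeasurableSet[sigG X Y (t + 1)] (s ∩ Y ((t : ℤ) + 1) ⁻¹' B) :=
    (sigG_mono X Y (Nat.le_succ t) s hs).inter (hYt1 hB)
  -- pointwise identity
  have hpt : ∀ ω, (s ∩ Y ((t : ℤ) + 1) ⁻¹' B).indicator
      (fun ω => ENNReal.ofReal (Lam X Y ε σv (t + 1) ω)) ω = K (V ω, ε (t + 1) ω) := by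
    intro ω
    have hLam1 : Lam X Y ε σv (t + 1) ω = Lam X Y ε σv t ω *
        (b ω * stdPDF (Y ((t : ℤ) + 1) ω) / stdPDF (ε (t + 1) ω)) := by
      rw [Lam, Finset.prod_range_succ, sum_comm_b]
      rfl
    have hY : Y ((t : ℤ) + 1) ω = a ω + b ω * ε (t + 1) ω := hdyn t ω
    have hofReal : ENNReal.ofReal (Lam X Y ε σv (t + 1) ω)
        = ENNReal.ofReal (Lam X Y ε σv t ω) *
          ENNReal.ofReal (b ω * stdPDF (a ω + b ω * ε (t + 1) ω) / stdPDF (ε (t + 1) ω)) := by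
      rw [hLam1, ENNReal.ofReal_mul (Lam_nonneg hσ hXb t ω), hY]
    by_cases hωs : ω ∈ s
    · by_cases hωB : Y ((t : ℤ) + 1) ω ∈ B
      · rw [Set.indicator_of_mem (Set.mem_inter hωs hωB), hofReal]
        have hBmem : a ω + b ω * ε (t + 1) ω ∈ B := hY ▸ hωB
        simp only [hK_def, hV_def, hΦ_def, Set.indicator_of_mem hωs,
          Set.indicator_of_mem hBmem, one_mul]
      · have : ω ∉ s ∩ Y ((t : ℤ) + 1) ⁻¹' B := fun h => hωB h.2
        rw [Set.indicator_of_notMem this]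
        have hBmem : a ω + b ω * ε (t + 1) ω ∉ B := fun h => hωB (hY ▸ h)
        simp only [hK_def, hV_def, Set.indicator_of_notMem hBmem, zero_mul, mul_zero]
    · have : ω ∉ s ∩ Y ((t : ℤ) + 1) ⁻¹' B := fun h => hωs h.1
      rw [Set.indicator_of_notMem this]
      simp only [hK_def, hV_def, hΦ_def, Set.indicator_of_notMem hωs, zero_mul]
  -- a.e. positivity of b-component under map V
  have hbpos_v : ∀ᵐ v ∂(P.map V), 0 < v.2.2 := by
    rw [ae_map_iff hVm0.aemeasurable (measurableSet_lt measurable_const measurable_snd.snd)]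
    exact ae_of_all _ fun ω => hbpos ω
  -- main computation
  calc Pbar (s ∩ Y ((t : ℤ) + 1) ⁻¹' B)
      = ∫⁻ ω in s ∩ Y ((t : ℤ) + 1) ⁻¹' B,
          ENNReal.ofReal (Lam X Y ε σv (t + 1) ω) ∂P := hPbar (t + 1) _ hset
    _ = ∫⁻ ω, (s ∩ Y ((t : ℤ) + 1) ⁻¹' B).indicator
          (fun ω => ENNReal.ofReal (Lam X Y ε σv (t + 1) ω)) ω ∂P := by
        rw [lintegral_indicator (hm' _ hset)]
    _ = ∫⁻ ω, K (V ω, ε (t + 1) ω) ∂P := lintegral_congr hpt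
    _ = ∫⁻ q, K q ∂(P.map (fun ω => (V ω, ε (t + 1) ω))) := (lintegral_map hK hW).symm
    _ = ∫⁻ v, ∫⁻ e, K (v, e) ∂(gaussianReal 0 1) ∂(P.map V) := by
        rw [hmapeq, hεlaw t, lintegral_prod _ hK.aemeasurable]
    _ = ∫⁻ v, v.1 * gaussianReal 0 1 B ∂(P.map V) := by
        refine lintegral_congr_ae ?_
        filter_upwards [hbpos_v] with v hv
        have hTv : Measurable fun e : ℝ => v.2.1 + v.2.2 * e := by fun_prop
        have hmeas : Measurable fun e : ℝ =>
            B.indicator (fun _ => (1 : ℝ≥0∞)) (v.2.1 + v.2.2 * e) *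
              ENNReal.ofReal (v.2.2 * stdPDF (v.2.1 + v.2.2 * e) / stdPDF e) :=
          ((measurable_const.indicator hB).comp hTv).mul
            ((((measurable_stdPDF.comp hTv).const_mul _).div measurable_stdPDF).ennreal_ofReal)
        have h0 : ∫⁻ e, K (v, e) ∂(gaussianReal 0 1)
            = ∫⁻ e, v.1 * (B.indicator (fun _ => (1 : ℝ≥0∞)) (v.2.1 + v.2.2 * e) *
                ENNReal.ofReal (v.2.2 * stdPDF (v.2.1 + v.2.2 * e) / stdPDF e))
                  ∂(gaussianReal 0 1) := rfl
        rw [h0, lintegral_const_mul _ hmeas, inner_integral hB hv]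
    _ = (∫⁻ v, v.1 ∂(P.map V)) * gaussianReal 0 1 B := lintegral_mul_const _ measurable_fst
    _ = (∫⁻ ω, Φ ω ∂P) * gaussianReal 0 1 B := by
        rw [lintegral_map measurable_fst hVm0]
    _ = Pbar s * gaussianReal 0 1 B := by
        rw [hΦ_def, lintegral_indicator (hm _ hs), ← hPbar t s hs]


lemma gaussianPDFReal_zero_one (x : ℝ) : gaussianPDFReal 0 1 x = stdPDF x := by
  simp only [gaussianPDFReal, stdPDF]
  norm_num

lemma gaussianReal_zero_one_apply_eq (s : Set ℝ) :
    gaussianReal 0 1 s = ENNReal.ofReal (∫ x in s, stdPDF x) := by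
  rw [gaussianReal_apply_eq_integral 0 one_ne_zero s]
  have h : gaussianPDFReal 0 1 = stdPDF := funext gaussianPDFReal_zero_one
  rw [h]


/-- Under the probability measure `P̄` with `dP̄/dP|_{𝒢_t} = Λ_t`, the
random variables `Y_1, Y_2, …` are i.i.d. standard Gaussian `N(0,1)`; in particular, for every
`t ≥ 0` and `τ ∈ ℝ`, `P̄(Y_{t+1} ≤ τ | 𝒢_t) = ∫_{−∞}^τ φ(u) du` almost surely. -/
theorem Y_iid_std_gaussian_under_Pbar
    {Ω : Type*} [MeasurableSpace Ω] (P Pbar : Measure Ω)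
    [IsProbabilityMeasure P] [IsProbabilityMeasure Pbar]
    {N p : ℕ}
    (X : ℕ → Ω → Fin N → ℝ) (Y : ℤ → Ω → ℝ) (ε : ℕ → Ω → ℝ)
    (A : Matrix (Fin N) (Fin N) ℝ) (F : Fin N → (Fin p → ℝ) → ℝ) (σv : Fin N → ℝ)
    -- measurability of the processes
    (hXm : ∀ t, Measurable (X t)) (hYm : ∀ s, Measurable (Y s)) (hεm : ∀ t, Measurable (ε t))
    -- the noise variances are positive
    (hσ : ∀ i, 0 < σv i)
    -- the regression functions are affine
    (hFaff : ∀ i, ∃ (L : (Fin p → ℝ) →ₗ[ℝ] ℝ) (c : ℝ), ∀ v, F i v = L v + c)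
    -- the hidden chain takes values in the standard basis vectors of ℝ^N
    (hXb : ∀ t ω, ∃ i, X t ω = Pi.single i 1)
    -- (X_t) is a Markov chain with transition matrix A (a_{ij} = P(X_{t+1}=e_i | X_t=e_j))
    (hMarkov : ∀ t : ℕ,
      P[fun ω => X (t + 1) ω | sigG X Y t] =ᵐ[P] fun ω => A.mulVec (X t ω))
    -- dynamics : Y_{t+1} = F_{X_t}(Y_{t−p+1},…,Y_t) + σ_{X_t} ε_{t+1}
    (hdyn : ∀ (t : ℕ) (ω : Ω), Y ((t : ℤ) + 1) ω =
      (∑ i, X t ω i * F i (past Y p ((t : ℤ)) ω)) + (∑ i, X t ω i * σv i) * ε (t + 1) ω)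
    -- the ε's are i.i.d. standard Gaussian, ε_{t+1} independent of 𝒢_t
    (hεlaw : ∀ t : ℕ, Measure.map (ε (t + 1)) P = gaussianReal 0 1)
    (hεindep : ∀ t : ℕ,
      Indep (MeasurableSpace.comap (ε (t + 1)) inferInstance) (sigG X Y t) P)
    (hεiid : iIndepFun (fun t : ℕ => ε (t + 1)) P)
    -- P̄ is the measure whose Radon–Nikodym derivative restricted to 𝒢_t equals Λ_t
    (hPbar : ∀ (t : ℕ) (s : Set Ω), MeasurableSet[sigG X Y t] s →
      Pbar s = ∫⁻ ω in s, ENNReal.ofReal (Lam X Y ε σv t ω) ∂P)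
 :
    (∀ l : ℕ, Measure.map (Y ((l : ℤ) + 1)) Pbar = gaussianReal 0 1) ∧
    (iIndepFun (fun l : ℕ => Y ((l : ℤ) + 1)) Pbar) ∧
    (∀ (t : ℕ) (τ : ℝ),
      Pbar[Set.indicator {ω | Y ((t : ℤ) + 1) ω ≤ τ} (fun _ => (1 : ℝ)) | sigG X Y t]
        =ᵐ[Pbar] fun _ => ∫ u in Set.Iic τ, stdPDF u) := by
  classical
  have key : ∀ (t : ℕ) {B : Set ℝ}, MeasurableSet B → ∀ {s : Set Ω},
      MeasurableSet[sigG X Y t] s →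
      Pbar (s ∩ Y ((t : ℤ) + 1) ⁻¹' B) = Pbar s * gaussianReal 0 1 B :=
    fun t _ hB _ hs =>
      key_step P Pbar X Y ε F σv hXm hYm hεm hσ hFaff hXb hdyn hεlaw hεindep hPbar t hB hs
  -- Part 1 : marginal laws
  have part1 : ∀ l : ℕ, Measure.map (Y ((l : ℤ) + 1)) Pbar = gaussianReal 0 1 := by
    intro l
    refine Measure.ext fun B hB => ?_
    rw [Measure.map_apply (hYm _) hB]
    have := key l hB (s := Set.univ) MeasurableSet.univ
    rwa [Set.univ_inter, measure_univ, one_mul] at this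
  refine ⟨part1, ?_, ?_⟩
  -- Part 2 : independence
  · rw [iIndepFun_iff_measure_inter_preimage_eq_mul]
    intro S sets hsets
    induction S using Finset.induction_on_max with
    | empty => simp
    | insert a S' hlt IH =>
      have haS' : a ∉ S' := fun h => lt_irrefl a (hlt a h)
      have hsets' : ∀ i ∈ S', MeasurableSet (sets i) := fun i hi =>
        hsets i (Finset.mem_insert_of_mem hi)
      have hsmeas : MeasurableSet[sigG X Y a] (⋂ i ∈ S', Y ((i : ℤ) + 1) ⁻¹' sets i) := by
        refine MeasurableSet.biInter S'.countable_toSet fun i hi => ?_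
        have hYi : Measurable[sigG X Y a] (Y ((i : ℤ) + 1)) := by
          have : ((i : ℤ) + 1) ≤ (a : ℤ) := by
            have := hlt i hi; omega
          exact measurable_Y_sigG X Y this
        exact hYi (hsets' i hi)
      rw [Finset.set_biInter_insert, Set.inter_comm, Finset.prod_insert haS',
        key a (hsets a (Finset.mem_insert_self a S')) hsmeas, IH hsets',
        ← Measure.map_apply (hYm _) (hsets a (Finset.mem_insert_self a S')), part1 a]
      ring
  -- Part 3 : conditional expectation
  · intro t τ
    have hm : sigG X Y t ≤ ‹MeasurableSpace Ω› := sigG_le X Y hXm hYm t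
    haveI : SigmaFinite (Pbar.trim hm) := by infer_instance
    set Aset : Set Ω := {ω | Y ((t : ℤ) + 1) ω ≤ τ} with hA_def
    have hAset : MeasurableSet Aset := (hYm _) measurableSet_Iic
    have hApre : Aset = Y ((t : ℤ) + 1) ⁻¹' Set.Iic τ := rfl
    set c : ℝ := ∫ u in Set.Iic τ, stdPDF u with hc_def
    have hcN : gaussianReal 0 1 (Set.Iic τ) = ENNReal.ofReal c :=
      gaussianReal_zero_one_apply_eq (Set.Iic τ)
    have hc_nonneg : 0 ≤ c :=
      setIntegral_nonneg measurableSet_Iic fun u _ => (stdPDF_pos u).le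
    have hf : Integrable (Set.indicator Aset (fun _ => (1 : ℝ))) Pbar :=
      (integrable_const (1 : ℝ)).indicator hAset
    refine (ae_eq_condExp_of_forall_setIntegral_eq hm hf
      (fun s _ _ => (integrable_const c).integrableOn)
      (fun s hs hμs => ?_) stronglyMeasurable_const.aestronglyMeasurable).symm
    have hPbar_inter : Pbar (s ∩ Aset) = Pbar s * ENNReal.ofReal c := by
      rw [hApre]
      rw [key t measurableSet_Iic hs, hcN]
    rw [setIntegral_const, setIntegral_indicator hAset, setIntegral_const]
    simp only [smul_eq_mul, mul_one]
    rw [measureReal_def, measureReal_def, hPbar_inter, ENNReal.toReal_mul, ENNReal.toReal_ofReal hc_nonneg]
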